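/- arXiv:2409.11339 — 4 statements merged into one kernel-verified Lean document; each statement's English description precedes it below -/
import Mathlib

section
/- Let Z ~ N(0,1), r ≥ 0, σ > 0, Δt > 0, P₀ > 0, and F(P₀,P₁) := P₁(1/√P₁ - 1/√P₀)⁺ + (√P₁ - √P₀)⁺. Set P₁ := P₀·exp((r - σ²/2)Δt + σ√Δt·Z). Then e^{-rΔt}·E[F(P₀, P₁)] = √P₀ · [ e^{-(r + σ²/4)Δt/2} - 1 + Φ((r + σ²/2)√Δt/σ) - e^{-rΔt}·Φ((r - σ²/2)√Δt/σ) ], where Φ is the standard normal CDF. -/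
open Real MeasureTheory ProbabilityTheory Set
open scoped ENNReal NNReal

/-- standard normal CDF -/
noncomputable def Phi (x : ℝ) : ℝ := ∫ t in Set.Iic x, Real.exp (-t^2/2) / Real.sqrt (2*π)

/-- CPMM per-block fee functional, with x⁺ = max x 0. -/
noncomputable def F (P₀ P₁ : ℝ) : ℝ :=
  P₁ * max (1 / Real.sqrt P₁ - 1 / Real.sqrt P₀) 0 + max (Real.sqrt P₁ - Real.sqrt P₀) 0

noncomputable def stdG (x : ℝ) : ℝ := Real.exp (-x^2/2) / Real.sqrt (2*π)

lemma sqrt2pi_pos : 0 < Real.sqrt (2*π) := Real.sqrt_pos.2 (by positivity)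

lemma stdG_nonneg (x : ℝ) : 0 ≤ stdG x := by unfold stdG; positivity

lemma stdG_cont : Continuous stdG := by
  unfold stdG; fun_prop

lemma stdG_even (x : ℝ) : stdG (-x) = stdG x := by simp [stdG]

lemma Phi_eq (x : ℝ) : Phi x = ∫ t in Set.Iic x, stdG t := rfl

lemma stdG_shift (a x : ℝ) : Real.exp (a*x) * stdG x = Real.exp (a^2/2) * stdG (x - a) := by
  have h : Real.exp (a*x) * Real.exp (-x^2/2) = Real.exp (a^2/2) * Real.exp (-(x-a)^2/2) := by
    rw [← Real.exp_add, ← Real.exp_add]; exact congrArg Real.exp (by ring)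
  unfold stdG
  rw [mul_div_assoc', mul_div_assoc', h]

lemma stdG_integrable : Integrable stdG := by
  have h : Integrable (fun x:ℝ => Real.exp (-(1/2:ℝ)*x^2)) := integrable_exp_neg_mul_sq (by norm_num)
  have h2 := h.div_const (Real.sqrt (2*π))
  apply h2.congr
  filter_upwards with x
  unfold stdG; ring_nf

lemma stdG_total : (∫ x, stdG x) = 1 := by
  have h : (∫ x:ℝ, Real.exp (-(1/2:ℝ)*x^2)) = Real.sqrt (π/(1/2)) := integral_gaussian _
  have h2 : (∫ x, stdG x) = (∫ x:ℝ, Real.exp (-(1/2:ℝ)*x^2)) / Real.sqrt (2*π) := by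
    rw [← integral_div]
    congr 1; ext x; unfold stdG; ring_nf
  rw [h2, h, show π/(1/2) = 2*π by ring]
  exact div_self (ne_of_gt sqrt2pi_pos)

lemma exp_mul_stdG_integrable (a : ℝ) : Integrable (fun x => Real.exp (a*x) * stdG x) := by
  simp_rw [stdG_shift a]
  exact ((stdG_integrable.comp_sub_right a).const_mul _)

lemma int_exp_mul_stdG (a : ℝ) : (∫ x, Real.exp (a*x) * stdG x) = Real.exp (a^2/2) := by
  simp_rw [stdG_shift a]
  rw [integral_const_mul, integral_sub_right_eq_self stdG a, stdG_total, mul_one]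

lemma int_exp_mul_stdG_Iic (a c : ℝ) :
    (∫ x in Set.Iic c, Real.exp (a*x) * stdG x) = Real.exp (a^2/2) * Phi (c - a) := by
  rw [← integral_indicator measurableSet_Iic]
  have h : ∀ x, (Set.Iic c).indicator (fun x => Real.exp (a*x) * stdG x) x
      = Real.exp (a^2/2) * (Set.Iic (c-a)).indicator stdG (x - a) := by
    intro x
    simp only [Set.indicator_apply, Set.mem_Iic]
    by_cases hx : x ≤ c
    · rw [if_pos hx, if_pos (by linarith), stdG_shift]
    · rw [if_neg hx, if_neg (by intro h; exact hx (by linarith)), mul_zero]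
  simp_rw [h]
  rw [integral_const_mul, integral_sub_right_eq_self (fun y => (Set.Iic (c-a)).indicator stdG y) a,
    integral_indicator measurableSet_Iic, Phi_eq]

lemma Phi_neg (x : ℝ) : Phi (-x) = 1 - Phi x := by
  have h1 : Phi (-x) = ∫ t in Set.Ioi x, stdG t := by
    rw [Phi_eq, ← integral_Ici_eq_integral_Ioi, ← integral_indicator measurableSet_Iic,
      ← integral_indicator measurableSet_Ici]
    calc (∫ t, (Set.Iic (-x)).indicator stdG t)
        = ∫ t, (Set.Ici x).indicator stdG (-t) := by
          congr 1; ext t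
          simp only [Set.indicator_apply, Set.mem_Iic, Set.mem_Ici]
          by_cases h : t ≤ -x
          · rw [if_pos h, if_pos (by linarith), stdG_even]
          · rw [if_neg h, if_neg (by intro hh; exact h (by linarith))]
      _ = ∫ t, (Set.Ici x).indicator stdG t := integral_neg_eq_self _ _
  have tot := intervalIntegral.integral_Iic_add_Ioi (b := x)
    stdG_integrable.integrableOn stdG_integrable.integrableOn
  rw [stdG_total] at tot
  rw [h1, Phi_eq]
  linarith

lemma F_formula {P₀ : ℝ} (hP : 0 < P₀) (x : ℝ) :
    F P₀ (P₀ * Real.exp x) = Real.sqrt P₀ * (Real.exp (x/2) - Real.exp (min x 0)) := by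
  have h0 : 0 < Real.sqrt P₀ := Real.sqrt_pos.2 hP
  have hsq : Real.sqrt P₀ * Real.sqrt P₀ = P₀ := Real.mul_self_sqrt hP.le
  have hs : Real.sqrt (P₀ * Real.exp x) = Real.sqrt P₀ * Real.exp (x/2) := by
    rw [Real.sqrt_mul hP.le, ← Real.exp_half]
  have hex : Real.exp x = Real.exp (x/2) * Real.exp (x/2) := by
    rw [← Real.exp_add]; ring_nf
  have ht : 0 < Real.exp (x/2) := Real.exp_pos _
  unfold F
  rw [hs]
  set t := Real.exp (x/2) with htdef
  rcases le_or_gt x 0 with hx | hx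
  · rw [min_eq_left hx]
    have e2 : t ≤ 1 := Real.exp_le_one_iff.2 (by linarith)
    rw [max_eq_left (by
      rw [sub_nonneg]
      apply one_div_le_one_div_of_le (by positivity)
      nlinarith), max_eq_right (by nlinarith)]
    rw [hex, show P₀ * (t*t) = (Real.sqrt P₀*t)*(Real.sqrt P₀*t) from by linear_combination (-(t*t)) * hsq]
    field_simp
    ring
  · rw [min_eq_right hx.le]
    have e2 : 1 ≤ t := Real.one_le_exp_iff.2 (by linarith)
    rw [max_eq_right (by
      rw [sub_nonpos]
      apply one_div_le_one_div_of_le (by positivity)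
      nlinarith), max_eq_left (by nlinarith)]
    rw [Real.exp_zero]; ring
theorem stmt3 {Ω : Type*} [MeasurableSpace Ω] (μ : Measure Ω) [IsProbabilityMeasure μ]
    (Z : Ω → ℝ) (hZ : Measure.map Z μ = gaussianReal 0 1)
    (r σ Δt P₀ : ℝ) (hr : 0 ≤ r) (hσ : 0 < σ) (hΔt : 0 < Δt) (hP : 0 < P₀) :
    Real.exp (-(r*Δt)) *
        ∫ ω, F P₀ (P₀ * Real.exp ((r - σ^2/2)*Δt + σ * Real.sqrt Δt * Z ω)) ∂μ
      = Real.sqrt P₀ *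
        (Real.exp (-(r + σ^2/4)*Δt/2) - 1
          + Phi ((r + σ^2/2) * Real.sqrt Δt / σ)
          - Real.exp (-(r*Δt)) * Phi ((r - σ^2/2) * Real.sqrt Δt / σ)) := by
  have hZae : AEMeasurable Z μ := by
    by_contra h
    rw [Measure.map_of_not_aemeasurable h] at hZ
    have h1 : (gaussianReal 0 1) Set.univ = 1 := measure_univ
    rw [← hZ] at h1
    simp at h1
  set u := Real.sqrt Δt with hu
  have hu0 : 0 < u := Real.sqrt_pos.2 hΔt
  have hu2 : u^2 = Δt := Real.sq_sqrt hΔt.le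
  set s := σ * u with hsdef
  have hs0 : 0 < s := by positivity
  set m := (r - σ^2/2) * Δt with hm
  set c : ℝ := -m / s with hc
  simp only [F_formula hP]
  have hgcont : Continuous (fun z : ℝ =>
      Real.sqrt P₀ * (Real.exp ((m + s*z)/2) - Real.exp (min (m + s*z) 0))) := by
    apply Continuous.mul continuous_const
    exact (Real.continuous_exp.comp (by fun_prop)).sub
      (Real.continuous_exp.comp
        ((continuous_const.add (continuous_const.mul continuous_id)).min continuous_const))
  have key1 : (∫ ω, Real.sqrt P₀ * (Real.exp ((m + s * Z ω)/2)
        - Real.exp (min (m + s * Z ω) 0)) ∂μ)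
      = ∫ z, Real.sqrt P₀ * (Real.exp ((m + s*z)/2) - Real.exp (min (m + s*z) 0))
          ∂(gaussianReal 0 1) := by
    rw [← hZ]
    exact (integral_map hZae hgcont.aestronglyMeasurable).symm
  have pdf_eq : ∀ z, gaussianPDFReal 0 1 z = stdG z := by
    intro z
    rw [gaussianPDFReal, stdG]
    norm_num
    ring
  have key2 : (∫ z, Real.sqrt P₀ * (Real.exp ((m + s*z)/2) - Real.exp (min (m + s*z) 0))
          ∂(gaussianReal 0 1))
      = ∫ z, stdG z * (Real.sqrt P₀ * (Real.exp ((m + s*z)/2)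
          - Real.exp (min (m + s*z) 0))) := by
    rw [gaussianReal_of_var_ne_zero 0 one_ne_zero]
    rw [show (gaussianPDF 0 1) = fun x => ((Real.toNNReal (gaussianPDFReal 0 1 x) : ℝ≥0) : ℝ≥0∞)
      from rfl]
    rw [integral_withDensity_eq_integral_smul ((measurable_gaussianPDFReal 0 1).real_toNNReal)]
    congr 1; ext z
    rw [NNReal.smul_def, Real.coe_toNNReal _ (gaussianPDFReal_nonneg 0 1 z), pdf_eq,
      smul_eq_mul]
  have hA : Integrable (fun z => Real.exp ((m + s*z)/2) * stdG z) := by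
    apply ((exp_mul_stdG_integrable (s/2)).const_mul (Real.exp (m/2))).congr
    filter_upwards with z
    rw [← mul_assoc, ← Real.exp_add]
    congr 1; ring
  have hBc : Continuous (fun z => Real.exp (min (m + s*z) 0) * stdG z) :=
    (Real.continuous_exp.comp
      ((continuous_const.add (continuous_const.mul continuous_id)).min continuous_const)).mul
      stdG_cont
  have hB : Integrable (fun z => Real.exp (min (m + s*z) 0) * stdG z) := by
    refine stdG_integrable.mono hBc.aestronglyMeasurable (ae_of_all _ fun z => ?_)
    rw [Real.norm_eq_abs, Real.norm_eq_abs,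
      abs_of_nonneg (mul_nonneg (Real.exp_pos _).le (stdG_nonneg z)),
      abs_of_nonneg (stdG_nonneg z)]
    have h1 : Real.exp (min (m + s*z) 0) ≤ 1 := Real.exp_le_one_iff.2 (min_le_right _ _)
    nlinarith [stdG_nonneg z]
  have T1 : (∫ z, Real.exp ((m + s*z)/2) * stdG z)
      = Real.exp (m/2) * Real.exp ((s/2)^2/2) := by
    have h : ∀ z, Real.exp ((m + s*z)/2) * stdG z
        = Real.exp (m/2) * (Real.exp ((s/2)*z) * stdG z) := by
      intro z; rw [← mul_assoc, ← Real.exp_add]; congr 1; ring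
    simp_rw [h]
    rw [integral_const_mul, int_exp_mul_stdG]
  have T2 : (∫ z, Real.exp (min (m + s*z) 0) * stdG z)
      = Real.exp m * (Real.exp (s^2/2) * Phi (c - s)) + (1 - Phi c) := by
    rw [← intervalIntegral.integral_Iic_add_Ioi (b := c) hB.integrableOn hB.integrableOn]
    have hIic : (∫ z in Set.Iic c, Real.exp (min (m + s*z) 0) * stdG z)
        = Real.exp m * (Real.exp (s^2/2) * Phi (c - s)) := by
      rw [setIntegral_congr_fun measurableSet_Iic
        (g := fun z => Real.exp m * (Real.exp (s*z) * stdG z)) ?_]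
      · rw [integral_const_mul, int_exp_mul_stdG_Iic]
      · intro z hz
        simp only [Set.mem_Iic] at hz
        dsimp only
        have h2 : s * c = -m := by rw [hc]; field_simp
        have hms : m + s*z ≤ 0 := by
          nlinarith [mul_le_mul_of_nonneg_left hz hs0.le]
        rw [min_eq_left hms, Real.exp_add, mul_assoc]
    have hIoi : (∫ z in Set.Ioi c, Real.exp (min (m + s*z) 0) * stdG z) = 1 - Phi c := by
      rw [setIntegral_congr_fun measurableSet_Ioi (g := stdG) ?_]
      · have tot := intervalIntegral.integral_Iic_add_Ioi (b := c)
          stdG_integrable.integrableOn stdG_integrable.integrableOn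
        rw [stdG_total] at tot
        rw [← Phi_eq] at tot
        linarith
      · intro z hz
        simp only [Set.mem_Ioi] at hz
        dsimp only
        have h2 : s * c = -m := by rw [hc]; field_simp
        have hms : 0 ≤ m + s*z := by
          nlinarith [mul_le_mul_of_nonneg_left hz.le hs0.le]
        rw [min_eq_right hms, Real.exp_zero, one_mul]
    rw [hIic, hIoi]
  have key3 : (∫ z, stdG z * (Real.sqrt P₀ * (Real.exp ((m + s*z)/2)
        - Real.exp (min (m + s*z) 0))))
      = Real.sqrt P₀ * ((Real.exp (m/2) * Real.exp ((s/2)^2/2))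
          - (Real.exp m * (Real.exp (s^2/2) * Phi (c - s)) + (1 - Phi c))) := by
    have h : ∀ z, stdG z * (Real.sqrt P₀ * (Real.exp ((m + s*z)/2)
        - Real.exp (min (m + s*z) 0)))
        = Real.sqrt P₀ * (Real.exp ((m + s*z)/2) * stdG z
            - Real.exp (min (m + s*z) 0) * stdG z) := fun z => by ring
    simp_rw [h]
    rw [integral_const_mul, integral_sub hA hB, T1, T2]
  rw [key1, key2, key3]
  have hc2 : c - s = -((r + σ^2/2) * u / σ) := by
    rw [hc, hm, hsdef, ← hu2]
    field_simp
    ring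
  have hc1 : c = -((r - σ^2/2) * u / σ) := by
    rw [hc, hm, hsdef, ← hu2]
    field_simp
  rw [hc2, hc1, Phi_neg, Phi_neg]
  have k1 : Real.exp (-(r*Δt)) * (Real.exp (m/2) * Real.exp ((s/2)^2/2))
      = Real.exp (-(r + σ^2/4)*Δt/2) := by
    rw [← Real.exp_add, ← Real.exp_add]
    congr 1
    rw [hm, hsdef, ← hu2]; ring
  have k2 : Real.exp (-(r*Δt)) * (Real.exp m * Real.exp (s^2/2)) = 1 := by
    rw [← Real.exp_add, ← Real.exp_add, hm, hsdef, ← hu2,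
      show (-(r*u^2) + ((r - σ^2/2)*u^2 + (σ*u)^2/2)) = 0 from by ring, Real.exp_zero]
  linear_combination (Real.sqrt P₀) * k1
    - (Real.sqrt P₀) * (1 - Phi ((r + σ^2/2) * u / σ)) * k2
end

section
/- Fix r ≥ 0, σ > 0, Δt > 0, γ̂ > 0 with γ̂ ≥ γ̂* (where γ̂* is as in the CPMM valuation theorem). Define V(P) := (2γ̂/γ̂*)·√P for P > 0. Then V satisfies the dynamic programming fixed-point equation: for every P > 0, V(P) = max{ 2√P , e^{-rΔt}·E[ V(P·e^{(r-σ²/2)Δt + σ√Δt·Z}) + γ̂·F(P, P·e^{(r-σ²/2)Δt + σ√Δt·Z}) ] }, where Z ~ N(0,1) and F(P₀,P₁) := P₁(1/√P₁ - 1/√P₀)⁺ + (√P₁ - √P₀)⁺. -/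
open Real MeasureTheory ProbabilityTheory
open scoped ENNReal NNReal

/-- critical fee level γ̂* from the CPMM valuation theorem -/
noncomputable def gammaStar (r σ Δt : ℝ) : ℝ :=
  2 * (-1 + (Phi ((r + σ^2/2) * Real.sqrt Δt / σ)
      - Real.exp (-(r*Δt)) * Phi ((r - σ^2/2) * Real.sqrt Δt / σ)) /
      (1 - Real.exp (-(r + σ^2/4)*Δt/2)))⁻¹

namespace Stmt6Aux

open Set

lemma pdf_eq (x : ℝ) : gaussianPDFReal 0 1 x = Real.exp (-x^2/2) / Real.sqrt (2*π) := by
  simp [gaussianPDFReal, div_eq_mul_inv, mul_comm]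

lemma pdf_nn_meas : Measurable fun x => Real.toNNReal (gaussianPDFReal 0 1 x) :=
  (measurable_gaussianPDFReal 0 1).real_toNNReal

lemma gaussianPDF_eq_nn :
    gaussianPDF 0 1 = fun x => ((gaussianPDFReal 0 1 x).toNNReal : ℝ≥0∞) := rfl

lemma integral_gaussian_eq (f : ℝ → ℝ) :
    ∫ x, f x ∂(gaussianReal 0 1) = ∫ x, f x * gaussianPDFReal 0 1 x := by
  rw [gaussianReal_of_var_ne_zero _ one_ne_zero, gaussianPDF_eq_nn,
    integral_withDensity_eq_integral_smul pdf_nn_meas]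
  congr 1 with x
  rw [NNReal.smul_def, Real.coe_toNNReal _ (gaussianPDFReal_nonneg 0 1 x), smul_eq_mul, mul_comm]

lemma setIntegral_gaussian_eq (f : ℝ → ℝ) {s : Set ℝ} (hs : MeasurableSet s) :
    ∫ x in s, f x ∂(gaussianReal 0 1) = ∫ x in s, f x * gaussianPDFReal 0 1 x := by
  rw [gaussianReal_of_var_ne_zero _ one_ne_zero, gaussianPDF_eq_nn, restrict_withDensity hs,
    integral_withDensity_eq_integral_smul pdf_nn_meas]
  congr 1 with x
  rw [NNReal.smul_def, Real.coe_toNNReal _ (gaussianPDFReal_nonneg 0 1 x), smul_eq_mul, mul_comm]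

lemma integrable_gaussian_iff (f : ℝ → ℝ) :
    Integrable f (gaussianReal 0 1) ↔ Integrable (fun x => f x * gaussianPDFReal 0 1 x) volume := by
  rw [gaussianReal_of_var_ne_zero _ one_ne_zero, gaussianPDF_eq_nn,
    integrable_withDensity_iff_integrable_smul pdf_nn_meas]
  exact integrable_congr (Filter.Eventually.of_forall fun x => by
    simp only []
    rw [NNReal.smul_def, Real.coe_toNNReal _ (gaussianPDFReal_nonneg 0 1 x), smul_eq_mul, mul_comm])

lemma mul_pdf (c x : ℝ) :
    Real.exp (c*x) * gaussianPDFReal 0 1 x = Real.exp (c^2/2) * gaussianPDFReal c 1 x := by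
  simp only [gaussianPDFReal, NNReal.coe_one]
  rw [mul_left_comm, ← Real.exp_add, mul_left_comm, ← Real.exp_add]
  congr 1
  ring

lemma integrable_exp_gaussian (c : ℝ) :
    Integrable (fun x => Real.exp (c*x)) (gaussianReal 0 1) := by
  rw [integrable_gaussian_iff]
  simp_rw [mul_pdf]
  exact (integrable_gaussianPDFReal c 1).const_mul _

lemma integral_exp_gaussian (c : ℝ) :
    ∫ x, Real.exp (c*x) ∂(gaussianReal 0 1) = Real.exp (c^2/2) := by
  rw [integral_gaussian_eq]
  simp_rw [mul_pdf]
  rw [integral_const_mul, integral_gaussianPDFReal_eq_one c one_ne_zero, mul_one]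

lemma pdf_shift (c x : ℝ) : gaussianPDFReal c 1 x = gaussianPDFReal 0 1 (x - c) := by
  rw [gaussianPDFReal_sub, zero_add]

lemma shift_Iic (g : ℝ → ℝ) (c t : ℝ) :
    ∫ x in Iic t, g (x - c) = ∫ x in Iic (t - c), g x := by
  rw [← integral_indicator measurableSet_Iic, ← integral_indicator measurableSet_Iic,
    ← integral_sub_right_eq_self (Set.indicator (Iic (t-c)) g) c]
  congr 1 with x
  by_cases h : x ≤ t
  · have h1 : x - c ∈ Iic (t - c) := by simpa using h
    have h2 : x ∈ Iic t := h
    rw [Set.indicator_of_mem h1, Set.indicator_of_mem h2]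
  · have h1 : x - c ∉ Iic (t - c) := by simpa using h
    have h2 : x ∉ Iic t := h
    rw [Set.indicator_of_notMem h1, Set.indicator_of_notMem h2]

lemma shift_Ici (g : ℝ → ℝ) (c t : ℝ) :
    ∫ x in Ici t, g (x - c) = ∫ x in Ici (t - c), g x := by
  rw [← integral_indicator measurableSet_Ici, ← integral_indicator measurableSet_Ici,
    ← integral_sub_right_eq_self (Set.indicator (Ici (t-c)) g) c]
  congr 1 with x
  by_cases h : t ≤ x
  · have h1 : x - c ∈ Ici (t - c) := by simpa using h
    have h2 : x ∈ Ici t := h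
    rw [Set.indicator_of_mem h1, Set.indicator_of_mem h2]
  · have h1 : x - c ∉ Ici (t - c) := by simpa using h
    have h2 : x ∉ Ici t := h
    rw [Set.indicator_of_notMem h1, Set.indicator_of_notMem h2]

lemma Phi_pdf (t : ℝ) : Phi t = ∫ x in Iic t, gaussianPDFReal 0 1 x := by
  unfold Phi
  exact setIntegral_congr_fun measurableSet_Iic fun x _ => (pdf_eq x).symm

lemma Phi_Ici (t : ℝ) : ∫ x in Ici t, gaussianPDFReal 0 1 x = 1 - Phi t := by
  have h := intervalIntegral.integral_Iic_add_Ioi (b := t) (μ := volume)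
    ((integrable_gaussianPDFReal 0 1).integrableOn) ((integrable_gaussianPDFReal 0 1).integrableOn)
  rw [integral_gaussianPDFReal_eq_one 0 one_ne_zero] at h
  rw [integral_Ici_eq_integral_Ioi, ← Phi_pdf] at *
  linarith

lemma setIntegral_exp_Iic (c t : ℝ) :
    ∫ x in Iic t, Real.exp (c*x) ∂(gaussianReal 0 1) = Real.exp (c^2/2) * Phi (t - c) := by
  rw [setIntegral_gaussian_eq _ measurableSet_Iic]
  simp_rw [mul_pdf, pdf_shift c]
  rw [integral_const_mul, shift_Iic, ← Phi_pdf]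

lemma setIntegral_exp_Ici (c t : ℝ) :
    ∫ x in Ici t, Real.exp (c*x) ∂(gaussianReal 0 1) = Real.exp (c^2/2) * (1 - Phi (t - c)) := by
  rw [setIntegral_gaussian_eq _ measurableSet_Ici]
  simp_rw [mul_pdf, pdf_shift c]
  rw [integral_const_mul, shift_Ici, Phi_Ici]

lemma Phi_neg (t : ℝ) : Phi (-t) = 1 - Phi t := by
  rw [Phi_pdf, ← Phi_Ici]
  have h : ∀ x : ℝ, gaussianPDFReal 0 1 x = gaussianPDFReal 0 1 (-x) := by
    intro x; simp only [gaussianPDFReal]; congr 2; ring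
  calc ∫ x in Iic (-t), gaussianPDFReal 0 1 x
      = ∫ x in Iic (-t), gaussianPDFReal 0 1 (-x) := by simp_rw [← h]
    _ = ∫ x in Ioi t, gaussianPDFReal 0 1 x := by rw [integral_comp_neg_Iic]; norm_num
    _ = ∫ x in Ici t, gaussianPDFReal 0 1 x := (integral_Ici_eq_integral_Ioi).symm

lemma setIntegral_exp_Iic' (p c t : ℝ) :
    ∫ x in Iic t, Real.exp (p + c*x) ∂(gaussianReal 0 1)
      = Real.exp (p + c^2/2) * Phi (t - c) := by
  simp_rw [show ∀ x : ℝ, Real.exp (p + c*x) = Real.exp p * Real.exp (c*x) from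
    fun x => by rw [← Real.exp_add]]
  rw [integral_const_mul, setIntegral_exp_Iic, ← mul_assoc, ← Real.exp_add]

lemma setIntegral_exp_Ici' (p c t : ℝ) :
    ∫ x in Ici t, Real.exp (p + c*x) ∂(gaussianReal 0 1)
      = Real.exp (p + c^2/2) * (1 - Phi (t - c)) := by
  simp_rw [show ∀ x : ℝ, Real.exp (p + c*x) = Real.exp p * Real.exp (c*x) from
    fun x => by rw [← Real.exp_add]]
  rw [integral_const_mul, setIntegral_exp_Ici, ← mul_assoc, ← Real.exp_add]

lemma setIntegral_one_Ici (t : ℝ) :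
    ∫ x in Ici t, (1:ℝ) ∂(gaussianReal 0 1) = 1 - Phi t := by
  have h := setIntegral_exp_Ici 0 t
  simpa using h

lemma integrable_exp_gaussian' (p c : ℝ) :
    Integrable (fun x => Real.exp (p + c*x)) (gaussianReal 0 1) := by
  refine ((integrable_exp_gaussian c).const_mul (Real.exp p)).congr
    (Filter.Eventually.of_forall fun x => ?_)
  simp only []
  rw [← Real.exp_add]

lemma integral_exp_gaussian' (p c : ℝ) :
    ∫ x, Real.exp (p + c*x) ∂(gaussianReal 0 1) = Real.exp (p + c^2/2) := by
  simp_rw [show ∀ x : ℝ, Real.exp (p + c*x) = Real.exp p * Real.exp (c*x) from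
    fun x => by rw [← Real.exp_add]]
  rw [integral_const_mul, integral_exp_gaussian, ← Real.exp_add]

lemma nu_Ioi_pos (t : ℝ) : 0 < (gaussianReal 0 1) (Ioi t) := by
  rw [gaussianReal_of_var_ne_zero _ one_ne_zero, withDensity_apply _ measurableSet_Ioi]
  rw [lintegral_pos_iff_support (measurable_gaussianPDF 0 1)]
  have hsupp : Function.support (gaussianPDF 0 1) = univ := by
    ext x
    simp [Function.mem_support, (gaussianPDF_pos 0 one_ne_zero x).ne']
  rw [hsupp, Measure.restrict_apply_univ, Real.volume_Ioi]
  exact ENNReal.zero_lt_top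

lemma pos_part_pos (p c : ℝ) (hc : 0 < c) :
    0 < ∫ x, max (Real.exp (p + c*x) - 1) 0 ∂(gaussianReal 0 1) := by
  have hint : Integrable (fun x => Real.exp (p + c*x) - 1) (gaussianReal 0 1) :=
    (integrable_exp_gaussian' p c).sub (integrable_const 1)
  refine (integral_pos_iff_support_of_nonneg (f := fun x => max (Real.exp (p + c*x) - 1) 0)
    (fun x => le_max_right _ _) hint.pos_part).mpr ?_
  refine lt_of_lt_of_le (nu_Ioi_pos (-p/c)) (measure_mono fun x hx => ?_)
  have hx' : -p/c < x := hx
  have h1 : 0 < p + c*x := by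
    have := (div_lt_iff₀ hc).mp hx'
    nlinarith
  have h2 : (1:ℝ) < Real.exp (p + c*x) := by
    rw [show (1:ℝ) = Real.exp 0 from (Real.exp_zero).symm]
    exact Real.exp_lt_exp.mpr h1
  have : 0 < max (Real.exp (p + c*x) - 1) 0 := lt_of_lt_of_le (by linarith) (le_max_left _ _)
  exact Function.mem_support.mpr this.ne'

end Stmt6Aux
set_option maxHeartbeats 2000000 in
theorem stmt6 {Ω : Type*} [MeasurableSpace Ω] (μ : Measure Ω) [IsProbabilityMeasure μ]
    (Z : Ω → ℝ) (hZ : Measure.map Z μ = gaussianReal 0 1)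
    (r σ Δt γ : ℝ) (hr : 0 ≤ r) (hσ : 0 < σ) (hΔt : 0 < Δt) (hγpos : 0 < γ)
    (hγ : gammaStar r σ Δt ≤ γ) :
    ∀ P : ℝ, 0 < P →
      (2*γ/gammaStar r σ Δt) * Real.sqrt P
        = max (2 * Real.sqrt P)
            (Real.exp (-(r*Δt)) *
              ∫ ω, ((2*γ/gammaStar r σ Δt) *
                    Real.sqrt (P * Real.exp ((r - σ^2/2)*Δt + σ * Real.sqrt Δt * Z ω))
                  + γ * F P (P * Real.exp ((r - σ^2/2)*Δt + σ * Real.sqrt Δt * Z ω))) ∂μ) := by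
  intro P hP
  have hsqΔ : Real.sqrt Δt ^ 2 = Δt := Real.sq_sqrt hΔt.le
  have hsΔ : (0:ℝ) < Real.sqrt Δt := Real.sqrt_pos.mpr hΔt
  have hσ2 : (0:ℝ) < σ^2 := by positivity
  set s := σ * Real.sqrt Δt with hs_def
  have hs : 0 < s := mul_pos hσ hsΔ
  set a := (r - σ^2/2) * Δt with ha_def
  set t₀ := -a / s with ht₀_def
  set q := Real.sqrt P with hq_def
  have hq : 0 < q := Real.sqrt_pos.mpr hP
  set gS := gammaStar r σ Δt with hgS_def
  set B := 1 - Real.exp (-(r + σ^2/4)*Δt/2) with hB_def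
  have hB : 0 < B := by
    have h1 : Real.exp (-(r + σ^2/4)*Δt/2) < 1 := by
      rw [Real.exp_lt_one_iff]
      nlinarith
    rw [hB_def]; linarith
  set D := Phi ((r + σ^2/2) * Real.sqrt Δt / σ)
      - Real.exp (-(r*Δt)) * Phi ((r - σ^2/2) * Real.sqrt Δt / σ) with hD_def
  have hgS_eq : gS = 2 * (-1 + D/B)⁻¹ := by
    rw [hgS_def, hD_def, hB_def, gammaStar]
  -- Phi argument identities
  have key : ∀ u : ℝ, u * Δt / (σ * Real.sqrt Δt) = u * Real.sqrt Δt / σ := by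
    intro u
    rw [div_eq_div_iff (by positivity) hσ.ne']
    linear_combination (-(u*σ)) * hsqΔ
  have hdm : t₀ = -((r - σ^2/2) * Real.sqrt Δt / σ) := by
    rw [ht₀_def, ha_def, hs_def, neg_div, key]
  have hdp : t₀ - s = -((r + σ^2/2) * Real.sqrt Δt / σ) := by
    rw [hdm, hs_def]
    field_simp
    ring
  -- pointwise identity
  have hpt : ∀ y : ℝ, 2*γ/gS * Real.sqrt (P * Real.exp y) + γ * F P (P * Real.exp y)
      = q * (2*γ/gS * Real.exp (y/2)
          + γ * (max (Real.exp (y/2) - Real.exp y) 0 + max (Real.exp (y/2) - 1) 0)) := by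
    intro y
    have he2 : Real.exp (y/2) * Real.exp (y/2) = Real.exp y := by
      rw [← Real.exp_add]; congr 1; ring
    have hsqe : Real.sqrt (P * Real.exp y) = q * Real.exp (y/2) := by
      rw [Real.sqrt_mul hP.le, ← Real.exp_half]
    have hPq : P = q * q := (Real.mul_self_sqrt hP.le).symm
    have hepos : (0:ℝ) < Real.exp (y/2) := Real.exp_pos _
    simp only [F, hsqe]
    rw [mul_max_of_nonneg _ _ (by positivity : (0:ℝ) ≤ P * Real.exp y)]
    have h1 : P * Real.exp y * (1 / (q * Real.exp (y/2)) - 1 / q)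
        = q * (Real.exp (y/2) - Real.exp y) := by
      rw [hPq, ← he2]
      field_simp
    have h2 : q * Real.exp (y/2) - q = q * (Real.exp (y/2) - 1) := by ring
    rw [h1, mul_zero, h2]
    have hm1 : max (q * (Real.exp (y/2) - Real.exp y)) 0
        = q * max (Real.exp (y/2) - Real.exp y) 0 := by
      rw [mul_max_of_nonneg _ _ hq.le, mul_zero]
    have hm2 : max (q * (Real.exp (y/2) - 1)) 0 = q * max (Real.exp (y/2) - 1) 0 := by
      rw [mul_max_of_nonneg _ _ hq.le, mul_zero]
    rw [hm1, hm2]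
    ring
  -- gaussian side function
  set G : ℝ → ℝ := fun x => q * (2*γ/gS * Real.exp (a/2 + s/2*x)
      + γ * (max (Real.exp (a/2 + s/2*x) - Real.exp (a + s*x)) 0
           + max (Real.exp (a/2 + s/2*x) - 1) 0)) with hG_def
  have hGmeas : AEStronglyMeasurable G (Measure.map Z μ) := by
    apply Continuous.aestronglyMeasurable
    fun_prop
  have hZm : AEMeasurable Z μ := by
    apply aemeasurable_of_map_neZero
    rw [hZ]
    infer_instance
  have htrans : (∫ ω, (2*γ/gS *
                    Real.sqrt (P * Real.exp (a + s * Z ω))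
                  + γ * F P (P * Real.exp (a + s * Z ω))) ∂μ)
      = ∫ x, G x ∂(gaussianReal 0 1) := by
    calc (∫ ω, (2*γ/gS * Real.sqrt (P * Real.exp (a + s * Z ω))
              + γ * F P (P * Real.exp (a + s * Z ω))) ∂μ)
        = ∫ ω, G (Z ω) ∂μ := by
          refine integral_congr_ae (Filter.Eventually.of_forall fun ω => ?_)
          simp only []
          rw [hpt (a + s * Z ω), hG_def]
          simp only []
          rw [show (a + s * Z ω)/2 = a/2 + s/2 * Z ω from by ring]
      _ = ∫ x, G x ∂(Measure.map Z μ) := (integral_map hZm hGmeas).symm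
      _ = ∫ x, G x ∂(gaussianReal 0 1) := by rw [hZ]
  -- indicator identities
  have hiff : ∀ x : ℝ, x ≤ t₀ ↔ a + s*x ≤ 0 := by
    intro x
    rw [ht₀_def, le_div_iff₀ hs]
    constructor <;> intro h <;> nlinarith
  have hiff' : ∀ x : ℝ, t₀ ≤ x ↔ 0 ≤ a + s*x := by
    intro x
    rw [ht₀_def, div_le_iff₀ hs]
    constructor <;> intro h <;> nlinarith
  have hind₂ : (fun x => max (Real.exp (a/2 + s/2*x) - Real.exp (a + s*x)) 0)
      = Set.indicator (Set.Iic t₀) (fun x => Real.exp (a/2 + s/2*x) - Real.exp (a + s*x)) := by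
    funext x
    by_cases hx : x ≤ t₀
    · have hmem : x ∈ Set.Iic t₀ := hx
      rw [Set.indicator_of_mem hmem]
      have h0 : a + s*x ≤ 0 := (hiff x).mp hx
      have h1 : Real.exp (a + s*x) ≤ Real.exp (a/2 + s/2*x) := Real.exp_le_exp.mpr (by linarith)
      exact max_eq_left (by linarith)
    · have hmem : x ∉ Set.Iic t₀ := hx
      rw [Set.indicator_of_notMem hmem]
      have h0 : ¬ (a + s*x ≤ 0) := fun h => hx ((hiff x).mpr h)
      have h1 : Real.exp (a/2 + s/2*x) ≤ Real.exp (a + s*x) := Real.exp_le_exp.mpr (by linarith)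
      exact max_eq_right (by linarith)
  have hind₃ : (fun x => max (Real.exp (a/2 + s/2*x) - 1) 0)
      = Set.indicator (Set.Ici t₀) (fun x => Real.exp (a/2 + s/2*x) - 1) := by
    funext x
    by_cases hx : t₀ ≤ x
    · have hmem : x ∈ Set.Ici t₀ := hx
      rw [Set.indicator_of_mem hmem]
      have h0 : 0 ≤ a + s*x := (hiff' x).mp hx
      have h1 : (1:ℝ) ≤ Real.exp (a/2 + s/2*x) := by
        rw [show (1:ℝ) = Real.exp 0 from Real.exp_zero.symm]
        exact Real.exp_le_exp.mpr (by linarith)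
      exact max_eq_left (by linarith)
    · have hmem : x ∉ Set.Ici t₀ := hx
      rw [Set.indicator_of_notMem hmem]
      have h0 : a + s*x ≤ 0 := (hiff x).mp (not_le.mp hx).le
      have h1 : Real.exp (a/2 + s/2*x) ≤ Real.exp 0 := Real.exp_le_exp.mpr (by linarith)
      rw [Real.exp_zero] at h1
      exact max_eq_right (by linarith)
  -- integrability
  have intE2 : Integrable (fun x => Real.exp (a/2 + s/2*x)) (gaussianReal 0 1) :=
    Stmt6Aux.integrable_exp_gaussian' (a/2) (s/2)
  have intE1 : Integrable (fun x => Real.exp (a + s*x)) (gaussianReal 0 1) :=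
    Stmt6Aux.integrable_exp_gaussian' a s
  have intM2 : Integrable (fun x => max (Real.exp (a/2 + s/2*x) - Real.exp (a + s*x)) 0)
      (gaussianReal 0 1) := (intE2.sub intE1).pos_part
  have intM3 : Integrable (fun x => max (Real.exp (a/2 + s/2*x) - 1) 0)
      (gaussianReal 0 1) := (intE2.sub (integrable_const 1)).pos_part
  -- integral values
  have hI1 : ∫ x, Real.exp (a/2 + s/2*x) ∂(gaussianReal 0 1) = Real.exp (a/2 + s^2/8) := by
    rw [Stmt6Aux.integral_exp_gaussian']
    rw [show a/2 + (s/2)^2/2 = a/2 + s^2/8 from by ring]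
  have hM2 : ∫ x, max (Real.exp (a/2 + s/2*x) - Real.exp (a + s*x)) 0 ∂(gaussianReal 0 1)
      = Real.exp (a/2 + s^2/8) * Phi (t₀ - s/2) - Real.exp (a + s^2/2) * Phi (t₀ - s) := by
    rw [hind₂, integral_indicator measurableSet_Iic,
      integral_sub intE2.integrableOn intE1.integrableOn,
      Stmt6Aux.setIntegral_exp_Iic', Stmt6Aux.setIntegral_exp_Iic',
      show a/2 + (s/2)^2/2 = a/2 + s^2/8 from by ring]
  have hM3 : ∫ x, max (Real.exp (a/2 + s/2*x) - 1) 0 ∂(gaussianReal 0 1)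
      = Real.exp (a/2 + s^2/8) * (1 - Phi (t₀ - s/2)) - (1 - Phi t₀) := by
    rw [hind₃, integral_indicator measurableSet_Ici,
      integral_sub intE2.integrableOn (integrable_const 1).integrableOn,
      Stmt6Aux.setIntegral_exp_Ici', Stmt6Aux.setIntegral_one_Ici,
      show a/2 + (s/2)^2/2 = a/2 + s^2/8 from by ring]
  have hM2nonneg : 0 ≤ ∫ x, max (Real.exp (a/2 + s/2*x) - Real.exp (a + s*x)) 0
      ∂(gaussianReal 0 1) := integral_nonneg fun x => le_max_right _ _
  have hM3pos : 0 < ∫ x, max (Real.exp (a/2 + s/2*x) - 1) 0 ∂(gaussianReal 0 1) :=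
    Stmt6Aux.pos_part_pos (a/2) (s/2) (by positivity)
  -- whole integral
  have hIG : ∫ x, G x ∂(gaussianReal 0 1)
      = q * (2*γ/gS * Real.exp (a/2 + s^2/8)
          + γ * ((∫ x, max (Real.exp (a/2 + s/2*x) - Real.exp (a + s*x)) 0 ∂(gaussianReal 0 1))
               + (∫ x, max (Real.exp (a/2 + s/2*x) - 1) 0 ∂(gaussianReal 0 1)))) := by
    have intSum : Integrable (fun x => max (Real.exp (a/2 + s/2*x) - Real.exp (a + s*x)) 0
        + max (Real.exp (a/2 + s/2*x) - 1) 0) (gaussianReal 0 1) := intM2.add intM3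
    have intg : Integrable (fun x => γ * (max (Real.exp (a/2 + s/2*x) - Real.exp (a + s*x)) 0
        + max (Real.exp (a/2 + s/2*x) - 1) 0)) (gaussianReal 0 1) := intSum.const_mul γ
    have intc : Integrable (fun x => 2*γ/gS * Real.exp (a/2 + s/2*x)) (gaussianReal 0 1) :=
      intE2.const_mul _
    rw [hG_def, integral_const_mul]
    congr 1
    rw [integral_add intc intg, integral_const_mul, integral_const_mul,
      integral_add intM2 intM3, hI1]
  -- scalar identities
  have key1 : Real.exp (-(r*Δt)) * Real.exp (a/2 + s^2/8) = Real.exp (-(r + σ^2/4)*Δt/2) := by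
    rw [← Real.exp_add, ha_def, hs_def, mul_pow, hsqΔ]
    congr 1
    ring
  have key2 : Real.exp (-(r*Δt)) * Real.exp (a + s^2/2) = 1 := by
    rw [← Real.exp_add, ha_def, hs_def, mul_pow, hsqΔ,
      show -(r*Δt) + ((r - σ^2/2)*Δt + σ^2*Δt/2) = 0 from by ring, Real.exp_zero]
  have hEB : Real.exp (-(r + σ^2/4)*Δt/2) = 1 - B := by rw [hB_def]; ring
  have hDB : Real.exp (-(r*Δt)) *
        ((Real.exp (a/2 + s^2/8) * Phi (t₀ - s/2) - Real.exp (a + s^2/2) * Phi (t₀ - s))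
        + (Real.exp (a/2 + s^2/8) * (1 - Phi (t₀ - s/2)) - (1 - Phi t₀))) = D - B := by
    rw [hdp, hdm, Stmt6Aux.Phi_neg, Stmt6Aux.Phi_neg, hD_def, hB_def]
    linear_combination key1 + (Phi ((r + σ^2/2) * Real.sqrt Δt / σ) - 1) * key2
  -- positivity and gammaStar facts
  have hpos : 0 < D - B := by
    have h6 : 0 < Real.exp (-(r*Δt)) *
        ((∫ x, max (Real.exp (a/2 + s/2*x) - Real.exp (a + s*x)) 0 ∂(gaussianReal 0 1))
        + (∫ x, max (Real.exp (a/2 + s/2*x) - 1) 0 ∂(gaussianReal 0 1))) :=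
      mul_pos (Real.exp_pos _) (add_pos_of_nonneg_of_pos hM2nonneg hM3pos)
    rw [hM2, hM3, hDB] at h6
    exact h6
  have hK : 0 < -1 + D/B := by
    rw [show -1 + D/B = (D - B)/B from by field_simp; ring]
    exact div_pos hpos hB
  have hgSpos : 0 < gS := by rw [hgS_eq]; exact mul_pos two_pos (inv_pos.mpr hK)
  have hgSK : gS * (-1 + D/B) = 2 := by
    rw [hgS_eq, mul_assoc, inv_mul_cancel₀ hK.ne', mul_one]
  have hc₁ : 2*γ/gS = γ * (-1 + D/B) := by
    rw [div_eq_iff hgSpos.ne']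
    linear_combination (-γ) * hgSK
  have hKB : (-1 + D/B) * B = D - B := by field_simp [hB.ne']; ring
  -- continuation value equals LHS
  have hval : Real.exp (-(r*Δt)) * (q * (2*γ/gS * Real.exp (a/2 + s^2/8)
          + γ * ((Real.exp (a/2 + s^2/8) * Phi (t₀ - s/2) - Real.exp (a + s^2/2) * Phi (t₀ - s))
               + (Real.exp (a/2 + s^2/8) * (1 - Phi (t₀ - s/2)) - (1 - Phi t₀)))))
      = 2*γ/gS * q := by
    rw [hc₁]
    calc Real.exp (-(r*Δt)) * (q * (γ * (-1 + D/B) * Real.exp (a/2 + s^2/8)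
          + γ * ((Real.exp (a/2 + s^2/8) * Phi (t₀ - s/2) - Real.exp (a + s^2/2) * Phi (t₀ - s))
               + (Real.exp (a/2 + s^2/8) * (1 - Phi (t₀ - s/2)) - (1 - Phi t₀)))))
        = q * (γ * (-1 + D/B) * (Real.exp (-(r*Δt)) * Real.exp (a/2 + s^2/8))
            + γ * (Real.exp (-(r*Δt)) *
              ((Real.exp (a/2 + s^2/8) * Phi (t₀ - s/2) - Real.exp (a + s^2/2) * Phi (t₀ - s))
              + (Real.exp (a/2 + s^2/8) * (1 - Phi (t₀ - s/2)) - (1 - Phi t₀))))) := by ring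
      _ = q * (γ * (-1 + D/B) * (1 - B) + γ * (D - B)) := by rw [key1, hDB, hEB]
      _ = q * (γ * (-1 + D/B) * (1 - B) + γ * ((-1 + D/B) * B)) := by rw [hKB]
      _ = γ * (-1 + D/B) * q := by ring
  -- finish
  rw [htrans, hIG, hM2, hM3, hval]
  refine (max_eq_right ?_).symm
  have h2K : 2 ≤ 2*γ/gS := by
    rw [hc₁]
    calc (2:ℝ) = gS * (-1 + D/B) := hgSK.symm
      _ ≤ γ * (-1 + D/B) := mul_le_mul_of_nonneg_right hγ hK.le
  nlinarith
end

section
/- For r ≥ 0, Δt > 0, γ̂ > 0, define G(σ) := (2+γ̂)[1 - e^{-(r+σ²/4)Δt/2}] - γ̂[Φ((r+σ²/2)√Δt/σ) - e^{-rΔt}Φ((r-σ²/2)√Δt/σ)] for σ > 0. Then G is differentiable on (0,∞) with G'(σ) = e^{-(r+σ²/4)Δt/2}·[(2+γ̂)·σΔt/4 - γ̂·√(Δt/(2π))·e^{-r²Δt/(2σ²)}]. -/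
open Real

lemma gauss_integrable : MeasureTheory.Integrable
    (fun t : ℝ => Real.exp (-t^2/2) / Real.sqrt (2*π)) := by
  have h : MeasureTheory.Integrable (fun t : ℝ => Real.exp (-(1/2 : ℝ) * t^2)) :=
    integrable_exp_neg_mul_sq (by norm_num)
  have := h.div_const (Real.sqrt (2*π))
  convert this using 2 with t
  ring_nf

lemma Phi_hasDerivAt (x : ℝ) :
    HasDerivAt Phi (Real.exp (-x^2/2) / Real.sqrt (2*π)) x := by
  set f : ℝ → ℝ := fun t => Real.exp (-t^2/2) / Real.sqrt (2*π) with hf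
  have hfc : Continuous f := by
    apply Continuous.div_const
    exact (continuous_pow 2).neg.div_const 2 |>.rexp
  have hd : HasDerivAt (fun y => Phi 0 + ∫ t in (0:ℝ)..y, f t) (f x) x := by
    have H : HasDerivAt (fun y => ∫ t in (0:ℝ)..y, f t) (f x) x :=
      intervalIntegral.integral_hasDerivAt_right (a := 0) (b := x)
        gauss_integrable.intervalIntegrable
        hfc.aestronglyMeasurable.stronglyMeasurableAtFilter
        hfc.continuousAt
    exact H.const_add (Phi 0)
  have heq : ∀ y, Phi 0 + ∫ t in (0:ℝ)..y, f t = Phi y := by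
    intro y
    rw [← intervalIntegral.integral_Iic_sub_Iic gauss_integrable.integrableOn
      gauss_integrable.integrableOn]
    show Phi 0 + (Phi y - Phi 0) = Phi y
    ring
  exact hd.congr_of_eventuallyEq (Filter.Eventually.of_forall fun y => (heq y).symm) |>.congr_deriv rfl

theorem stmt9 (r Δt γ : ℝ) (hr : 0 ≤ r) (hΔt : 0 < Δt) (hγ : 0 < γ) :
    ∀ σ : ℝ, 0 < σ →
      HasDerivAt (fun s : ℝ =>
          (2+γ) * (1 - Real.exp (-(r + s^2/4)*Δt/2))
            - γ * (Phi ((r + s^2/2) * Real.sqrt Δt / s)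
                - Real.exp (-(r*Δt)) * Phi ((r - s^2/2) * Real.sqrt Δt / s)))
        (Real.exp (-(r + σ^2/4)*Δt/2) *
          ((2+γ) * σ * Δt / 4
            - γ * Real.sqrt (Δt/(2*π)) * Real.exp (-r^2*Δt/(2*σ^2)))) σ := by
  intro σ hσ
  have hσ0 : σ ≠ 0 := hσ.ne'
  have hsq : HasDerivAt (fun s : ℝ => s^2) (2*σ) σ := by
    simpa using hasDerivAt_pow 2 σ
  -- exponential term
  have h1 : HasDerivAt (fun s : ℝ => (2+γ) * (1 - Real.exp (-(r + s^2/4)*Δt/2)))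
      ((2+γ) * -(Real.exp (-(r + σ^2/4)*Δt/2) * ((-(2*σ/4))*Δt/2))) σ := by
    exact ((((((hsq.div_const 4).const_add r).neg.mul_const Δt).div_const 2).exp).const_sub 1).const_mul (2+γ)
  -- Phi(u) term
  have hu : HasDerivAt (fun s : ℝ => (r + s^2/2) * Real.sqrt Δt / s)
      (((2*σ/2)*Real.sqrt Δt * σ - (r + σ^2/2) * Real.sqrt Δt * 1) / σ^2) σ :=
    (((hsq.div_const 2).const_add r).mul_const (Real.sqrt Δt)).div (hasDerivAt_id σ) hσ0
  have hPu : HasDerivAt (fun s : ℝ => Phi ((r + s^2/2) * Real.sqrt Δt / s))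
      ((Real.exp (-((r + σ^2/2) * Real.sqrt Δt / σ)^2/2) / Real.sqrt (2*π)) *
        (((2*σ/2)*Real.sqrt Δt * σ - (r + σ^2/2) * Real.sqrt Δt * 1) / σ^2)) σ :=
    (Phi_hasDerivAt _).comp σ hu
  -- Phi(v) term
  have hv : HasDerivAt (fun s : ℝ => (r - s^2/2) * Real.sqrt Δt / s)
      ((-(2*σ/2)*Real.sqrt Δt * σ - (r - σ^2/2) * Real.sqrt Δt * 1) / σ^2) σ := by
    have := (((hsq.div_const 2).const_sub r).mul_const (Real.sqrt Δt)).div (hasDerivAt_id σ) hσ0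
    exact this
  have hPv : HasDerivAt (fun s : ℝ => Real.exp (-(r*Δt)) * Phi ((r - s^2/2) * Real.sqrt Δt / s))
      (Real.exp (-(r*Δt)) * ((Real.exp (-((r - σ^2/2) * Real.sqrt Δt / σ)^2/2) / Real.sqrt (2*π)) *
        ((-(2*σ/2)*Real.sqrt Δt * σ - (r - σ^2/2) * Real.sqrt Δt * 1) / σ^2))) σ :=
    (((Phi_hasDerivAt _).comp σ hv)).const_mul _
  have htot := h1.sub ((hPu.sub hPv).const_mul γ)
  refine htot.congr_deriv ?_
  symm
  -- now prove the equality of derivative values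
  have hs2 : Real.sqrt Δt ^ 2 = Δt := Real.sq_sqrt hΔt.le
  have e1 : Real.exp (-((r + σ^2/2) * Real.sqrt Δt / σ)^2/2)
      = Real.exp (-(r + σ^2/4)*Δt/2) * Real.exp (-r^2*Δt/(2*σ^2)) := by
    rw [← Real.exp_add]
    congr 1
    rw [div_pow, mul_pow, hs2]
    field_simp
    ring
  have e2 : Real.exp (-(r*Δt)) * Real.exp (-((r - σ^2/2) * Real.sqrt Δt / σ)^2/2)
      = Real.exp (-(r + σ^2/4)*Δt/2) * Real.exp (-r^2*Δt/(2*σ^2)) := by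
    rw [← Real.exp_add, ← Real.exp_add]
    congr 1
    rw [div_pow, mul_pow, hs2]
    field_simp
    ring
  have e3 : Real.sqrt (Δt/(2*π)) = Real.sqrt Δt / Real.sqrt (2*π) :=
    Real.sqrt_div hΔt.le _
  rw [e3, e1]
  rw [show Real.exp (-(r*Δt)) * ((Real.exp (-((r - σ^2/2) * Real.sqrt Δt / σ)^2/2) / Real.sqrt (2*π)) *
        ((-(2*σ/2)*Real.sqrt Δt * σ - (r - σ^2/2) * Real.sqrt Δt * 1) / σ^2))
      = (Real.exp (-(r*Δt)) * Real.exp (-((r - σ^2/2) * Real.sqrt Δt / σ)^2/2)) *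
        (((-(2*σ/2)*Real.sqrt Δt * σ - (r - σ^2/2) * Real.sqrt Δt * 1) / σ^2) / Real.sqrt (2*π))
      from by ring, e2]
  have h2π : Real.sqrt (2*π) ≠ 0 := by
    positivity
  field_simp
  ring
end

section
/- For r > 0, Δt > 0, γ̂ > 0, the derivative G'(σ) = e^{-(r+σ²/4)Δt/2}·[(2+γ̂)σΔt/4 - γ̂√(Δt/(2π))·e^{-r²Δt/(2σ²)}] has a root σ̄ > 0 satisfying (2+γ̂)σ̄Δt/4 = γ̂√(Δt/(2π))·e^{-r²Δt/(2σ̄²)} if and only if Δt ≤ Δ̄t := √(8/π)·(γ̂/((2+γ̂)r))·e^{-1/2}. Equivalently, the equation u·e^{r²Δt/(2u²)} = (4γ̂/((2+γ̂)Δt))·√(Δt/(2π)) has a solution u > 0 iff Δt ≤ Δ̄t, since the function u ↦ u·e^{r²Δt/(2u²)} on (0,∞) attains its minimum value r√(Δt·e) at u = r√Δt. -/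
open Real

theorem stmt13 (r Δt γ : ℝ) (hr : 0 < r) (hΔt : 0 < Δt) (hγ : 0 < γ) :
    ((∃ σb : ℝ, 0 < σb ∧
        (2+γ) * σb * Δt / 4
          = γ * Real.sqrt (Δt/(2*π)) * Real.exp (-r^2*Δt/(2*σb^2)))
      ↔ Δt ≤ Real.sqrt (8/π) * (γ / ((2+γ)*r)) * Real.exp (-(1:ℝ)/2)) ∧
    ((∃ u : ℝ, 0 < u ∧
        u * Real.exp (r^2*Δt/(2*u^2)) = (4*γ/((2+γ)*Δt)) * Real.sqrt (Δt/(2*π)))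
      ↔ Δt ≤ Real.sqrt (8/π) * (γ / ((2+γ)*r)) * Real.exp (-(1:ℝ)/2)) ∧
    (∀ u : ℝ, 0 < u →
      r * Real.sqrt (Δt * Real.exp 1) ≤ u * Real.exp (r^2*Δt/(2*u^2))) ∧
    (r * Real.sqrt Δt) * Real.exp (r^2*Δt/(2*(r * Real.sqrt Δt)^2))
      = r * Real.sqrt (Δt * Real.exp 1) := by
  have hπ : 0 < π := Real.pi_pos
  have h2γ : (0:ℝ) < 2 + γ := by linarith
  have hP0 : 0 < Real.exp ((1:ℝ)/2) := Real.exp_pos _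
  set P := Real.exp ((1:ℝ)/2) with hPdef
  have hQ0 : 0 < Real.sqrt (2*π) := Real.sqrt_pos.mpr (by positivity)
  set Q := Real.sqrt (2*π) with hQdef
  have hs0 : 0 < Real.sqrt Δt := Real.sqrt_pos.mpr hΔt
  set s := Real.sqrt Δt with hsdef
  have hsq : s^2 = Δt := Real.sq_sqrt hΔt.le
  have hsqrt1 : Real.sqrt (Δt/(2*π)) = s / Q := by
    rw [hsdef, hQdef, Real.sqrt_div hΔt.le]
  have hsqrt2 : Real.sqrt (Δt * Real.exp 1) = s * P := by
    rw [hsdef, hPdef, Real.sqrt_mul hΔt.le, ← Real.exp_half]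
  have hsqrt3 : Real.sqrt (8/π) = 4/Q := by
    have h8 : (8:ℝ)/π = (4/Q)^2 := by
      rw [div_pow, hQdef, Real.sq_sqrt (by positivity : (0:ℝ) ≤ 2*π)]
      rw [div_eq_div_iff (by positivity) (by positivity)]
      ring
    rw [h8, Real.sqrt_sq (by positivity)]
  have hexpneg : Real.exp (-(1:ℝ)/2) = P⁻¹ := by
    rw [show (-(1:ℝ)/2) = -(1/2) by ring, Real.exp_neg, hPdef]
  -- minimum lemma
  have hmin : ∀ u : ℝ, 0 < u →
      r * Real.sqrt (Δt * Real.exp 1) ≤ u * Real.exp (r^2*Δt/(2*u^2)) := by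
    intro u hu
    set t := r^2*Δt/u^2 with htdef
    have ht0 : 0 < t := by positivity
    have h1 : t ≤ Real.exp (t - 1) := by
      have := Real.add_one_le_exp (t - 1); linarith
    have h2 : Real.exp 1 * t ≤ Real.exp t := by
      rw [show t = (t-1) + 1 by ring, Real.exp_add]
      nlinarith [Real.exp_pos (1:ℝ), h1, Real.exp_pos (t-1)]
    have h3 : Real.sqrt (Real.exp 1 * t) ≤ Real.sqrt (Real.exp t) :=
      Real.sqrt_le_sqrt h2
    have e1 : Real.exp (r^2*Δt/(2*u^2)) = Real.sqrt (Real.exp t) := by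
      rw [← Real.exp_half, htdef]
      congr 1
      field_simp
    have e2 : u * Real.sqrt (Real.exp 1 * t) = r * Real.sqrt (Δt * Real.exp 1) := by
      rw [← Real.sqrt_sq hu.le, ← Real.sqrt_mul (sq_nonneg u),
          ← Real.sqrt_sq hr.le, ← Real.sqrt_mul (sq_nonneg r)]
      congr 1
      rw [htdef]
      field_simp
    calc r * Real.sqrt (Δt * Real.exp 1) = u * Real.sqrt (Real.exp 1 * t) := e2.symm
      _ ≤ u * Real.sqrt (Real.exp t) := mul_le_mul_of_nonneg_left h3 hu.le
      _ = u * Real.exp (r^2*Δt/(2*u^2)) := by rw [e1]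
  -- equality at u = r * sqrt Δt
  have heq : (r * s) * Real.exp (r^2*Δt/(2*(r * s)^2))
      = r * Real.sqrt (Δt * Real.exp 1) := by
    rw [hsqrt2, show r^2*Δt/(2*(r*s)^2) = 1/2 by
      rw [mul_pow, hsq]; field_simp]
    rw [hPdef]; ring
  -- threshold equivalence
  have key : (r * Real.sqrt (Δt * Real.exp 1)
        ≤ (4*γ/((2+γ)*Δt)) * Real.sqrt (Δt/(2*π)))
      ↔ Δt ≤ Real.sqrt (8/π) * (γ / ((2+γ)*r)) * Real.exp (-(1:ℝ)/2) := by
    rw [hsqrt1, hsqrt2, hsqrt3, hexpneg, ← hsq]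
    have kL : (r * (s*P) ≤ 4*γ/((2+γ)*s^2) * (s/Q))
        ↔ (s^2 * (Q*((2+γ)*r)*P)) * s ≤ (4*γ) * s := by
      rw [div_mul_div_comm, le_div_iff₀ (by positivity)]
      constructor <;> intro h <;> nlinarith [h]
    have kR : (s^2 ≤ 4/Q * (γ/((2+γ)*r)) * P⁻¹)
        ↔ s^2 * (Q*((2+γ)*r)*P) ≤ 4*γ := by
      rw [show 4/Q * (γ/((2+γ)*r)) * P⁻¹ = (4*γ)/(Q*((2+γ)*r)*P) by
        field_simp, le_div_iff₀ (by positivity)]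
    exact kL.trans ((mul_le_mul_iff_of_pos_right hs0).trans kR.symm)
  -- equivalence of the two equations
  have equiv : ∀ σ : ℝ, 0 < σ →
      ((2+γ) * σ * Δt / 4
          = γ * Real.sqrt (Δt/(2*π)) * Real.exp (-r^2*Δt/(2*σ^2))
        ↔ σ * Real.exp (r^2*Δt/(2*σ^2))
          = (4*γ/((2+γ)*Δt)) * Real.sqrt (Δt/(2*π))) := by
    intro σ hσ
    have hE : (0:ℝ) < Real.exp (r^2*Δt/(2*σ^2)) := Real.exp_pos _
    rw [show -r^2*Δt/(2*σ^2) = -(r^2*Δt/(2*σ^2)) by ring, Real.exp_neg]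
    generalize Real.sqrt (Δt/(2*π)) = S
    constructor <;> intro h <;> field_simp at h ⊢ <;> linear_combination h
  -- second iff
  have iff2 : (∃ u : ℝ, 0 < u ∧
      u * Real.exp (r^2*Δt/(2*u^2)) = (4*γ/((2+γ)*Δt)) * Real.sqrt (Δt/(2*π)))
      ↔ Δt ≤ Real.sqrt (8/π) * (γ / ((2+γ)*r)) * Real.exp (-(1:ℝ)/2) := by
    constructor
    · rintro ⟨u, hu, hueq⟩
      exact key.mp (hueq ▸ hmin u hu)
    · intro hle
      have hCmin := key.mpr hle
      set C := (4*γ/((2+γ)*Δt)) * Real.sqrt (Δt/(2*π)) with hCdef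
      have hC0 : 0 < C := by
        rw [hCdef, hsqrt1]; positivity
      set f : ℝ → ℝ := fun u => u * Real.exp (r^2*Δt/(2*u^2)) with hfdef
      have ha0 : 0 < r * s := by positivity
      have hab : r * s ≤ r * s + C := by linarith
      have hcont : ContinuousOn f (Set.Icc (r*s) (r*s+C)) := by
        apply ContinuousOn.mul continuousOn_id
        apply Real.continuous_exp.comp_continuousOn
        apply ContinuousOn.div continuousOn_const (by fun_prop)
        intro x hx
        have hx0 : 0 < x := lt_of_lt_of_le ha0 hx.1
        positivity
      have hfa : f (r*s) = r * Real.sqrt (Δt * Real.exp 1) := heq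
      have hfb : C ≤ f (r*s+C) := by
        have h1 : (1:ℝ) ≤ Real.exp (r^2*Δt/(2*(r*s+C)^2)) :=
          Real.one_le_exp (by positivity)
        calc C ≤ r*s+C := by linarith
          _ = (r*s+C) * 1 := by ring
          _ ≤ (r*s+C) * Real.exp (r^2*Δt/(2*(r*s+C)^2)) := by
              apply mul_le_mul_of_nonneg_left h1 (by linarith)
          _ = f (r*s+C) := rfl
      have hmem : C ∈ Set.Icc (f (r*s)) (f (r*s+C)) := by
        constructor
        · rw [hfa]; exact hCmin
        · exact hfb
      obtain ⟨u, huI, hfu⟩ := intermediate_value_Icc hab hcont hmem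
      exact ⟨u, lt_of_lt_of_le ha0 huI.1, hfu⟩
  refine ⟨?_, iff2, hmin, heq⟩
  rw [← iff2]
  constructor
  · rintro ⟨σ, hσ, h⟩; exact ⟨σ, hσ, (equiv σ hσ).mp h⟩
  · rintro ⟨u, hu, h⟩; exact ⟨u, hu, (equiv u hu).mpr h⟩
end
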